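/- Fix q_1, …, q_n ≥ 0 and m ≥ 1. Suppose x' ∈ ℝ^i satisfies x'_j ≥ 1 for all j ≤ i and ∑_{j=1}^i x'_j = m, and define integers x_j = ⌊x'_j⌋ for 2 ≤ j ≤ i and x_1 = m - ∑_{j=2}^i ⌊x'_j⌋. Then x is a feasible integer vector (x_j ≥ 1, ∑ x_j = m) with x_j ≥ x'_j/2 for all j, and hence ∑_{j=1}^i x_j/(x_j+q_j) ≥ (1/2)·∑_{j=1}^i x'_j/(x'_j+q_j). -/

import Mathlib

open Finset

lemma frac_half_mono (a b p : ℝ) (hp : 0 ≤ p) (ha : 1 ≤ a) (hab : a / 2 ≤ b) :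
    (1 / 2) * (a / (a + p)) ≤ b / (b + p) := by
  have hb : (0:ℝ) < b := by linarith
  have hap : (0:ℝ) < a + p := by linarith
  have hbp : (0:ℝ) < b + p := by linarith
  have heq : (1/2) * (a / (a + p)) = a / (2 * (a + p)) := by
    field_simp
  rw [heq, div_le_div_iff₀ (by linarith) hbp]
  nlinarith

/-- Rounding a feasible fractional solution (each coordinate ≥ 1, summing to `m`) by
    taking floors on coordinates `j ≠ 0` and putting the slack on coordinate `0`
    yields an integer vector with `x j ≥ 1`, `∑ x j = m`, `x j ≥ x' j / 2`, and losing
    at most a factor `1/2` in the objective `∑ x j/(x j + q j)`. -/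
theorem rounding_high_value (n m : ℕ) (hm : 1 ≤ m)
    (q : Fin (n + 1) → ℝ) (hq : ∀ j, 0 ≤ q j)
    (x' : Fin (n + 1) → ℝ) (hx1 : ∀ j, 1 ≤ x' j) (hxsum : ∑ j, x' j = m) :
    let x : Fin (n + 1) → ℤ := fun j =>
      if j = 0 then (m : ℤ) - ∑ j' ∈ univ.erase 0, ⌊x' j'⌋ else ⌊x' j⌋
    (∀ j, 1 ≤ x j) ∧ (∑ j, x j = (m : ℤ)) ∧
      (∀ j, x' j / 2 ≤ (x j : ℝ)) ∧
      (1 / 2) * ∑ j, x' j / (x' j + q j) ≤ ∑ j, (x j : ℝ) / ((x j : ℝ) + q j) := by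
  intro x
  -- basic facts about floors
  have hfl1 : ∀ j, (1:ℤ) ≤ ⌊x' j⌋ := fun j => Int.le_floor.mpr (by exact_mod_cast hx1 j)
  have hflhalf : ∀ j, x' j / 2 ≤ (⌊x' j⌋ : ℝ) := by
    intro j
    have h1 : (1:ℝ) ≤ (⌊x' j⌋ : ℝ) := by exact_mod_cast hfl1 j
    have h2 : x' j - 1 < (⌊x' j⌋ : ℝ) := Int.sub_one_lt_floor _
    linarith
  -- the value at 0
  have hsum' : x' 0 + ∑ j' ∈ univ.erase 0, x' j' = (m:ℝ) := by
    rw [Finset.add_sum_erase _ _ (mem_univ 0)]; exact hxsum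
  have h0 : x' 0 ≤ (x 0 : ℝ) := by
    have hle : (∑ j' ∈ univ.erase 0, (⌊x' j'⌋:ℝ)) ≤ ∑ j' ∈ univ.erase 0, x' j' :=
      Finset.sum_le_sum fun j _ => Int.floor_le _
    simp only [x, if_pos rfl]
    push_cast
    linarith
  have hhalf : ∀ j, x' j / 2 ≤ (x j : ℝ) := by
    intro j
    by_cases hj : j = 0
    · subst hj
      have := hx1 0
      linarith
    · simp only [x, if_neg hj]
      exact hflhalf j
  have hge1 : ∀ j, (1:ℤ) ≤ x j := by
    intro j
    by_cases hj : j = 0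
    · subst hj
      have : (1:ℝ) ≤ (x 0 : ℝ) := le_trans (hx1 0) h0
      exact_mod_cast this
    · simp only [x, if_neg hj]
      exact hfl1 j
  refine ⟨hge1, ?_, hhalf, ?_⟩
  · rw [← Finset.add_sum_erase _ _ (mem_univ 0)]
    have : ∑ j ∈ univ.erase 0, x j = ∑ j ∈ univ.erase 0, ⌊x' j⌋ :=
      Finset.sum_congr rfl fun j hj => by
        simp only [x, if_neg (Finset.ne_of_mem_erase hj)]
    rw [this]
    simp [x]
  · rw [Finset.mul_sum]
    refine Finset.sum_le_sum fun j _ => ?_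
    exact frac_half_mono (x' j) ((x j : ℝ)) (q j) (hq j) (hx1 j) (hhalf j)
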